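/- In the complex numbers, the difference of series ∑_{n=0}^∞ (1/(2n+1))·(1/(1−2i))^{2n+1} − ∑_{n=0}^∞ (1/(2n+1))·(1/(1+2i))^{2n+1} equals πi/4, where i = √−1. -/

import Mathlib

open Complex

lemma key_hasSum {z : ℂ} (hz : ‖Complex.I * z‖ < 1) :
    HasSum (fun n : ℕ => (1 / (2 * (n : ℂ) + 1)) * z ^ (2 * n + 1))
      (-Complex.I * Complex.arctan (Complex.I * z)) := by
  have h := (Complex.hasSum_arctan hz).mul_left (-Complex.I)
  convert h using 2 with n
  · rfl
  have hI : (Complex.I * z) ^ (2 * n + 1) = (-1) ^ n * Complex.I * z ^ (2 * n + 1) := by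
    rw [mul_pow, pow_succ, pow_mul, I_sq]
  have hs : ∀ w : ℂ, ((-1 : ℂ)) ^ n * ((-1 : ℂ) ^ n * w) = w := by
    intro w
    rw [← mul_assoc, ← mul_pow]
    norm_num
  rw [hI, mul_assoc ((-1 : ℂ) ^ n) Complex.I, hs]
  push_cast
  linear_combination (z ^ (2 * n + 1) / (2 * (n : ℂ) + 1)) * Complex.I_mul_I

lemma arg_one_add_I_div_two : Complex.arg ((1 + Complex.I) / 2) = Real.pi / 4 := by
  have hmem : Real.pi / 4 ∈ Set.Ioc (-Real.pi) Real.pi := by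
    constructor <;> nlinarith [Real.pi_pos]
  have h := Complex.arg_cos_add_sin_mul_I hmem
  rw [← Complex.ofReal_cos, ← Complex.ofReal_sin, Real.cos_pi_div_four, Real.sin_pi_div_four] at h
  have h2 : ((Real.sqrt 2 / 2 : ℝ) + (Real.sqrt 2 / 2 : ℝ) * Complex.I : ℂ)
      = (Real.sqrt 2 : ℝ) * ((1 + Complex.I) / 2) := by
    push_cast
    ring
  rw [h2, Complex.arg_real_mul _ (by positivity)] at h
  exact h

lemma log_diff : Complex.log ((1 - Complex.I) / 2) - Complex.log ((1 + Complex.I) / 2)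
    = -(Real.pi / 2) * Complex.I := by
  have hconj : ((1 - Complex.I) / 2 : ℂ) = (starRingEnd ℂ) ((1 + Complex.I) / 2) := by
    rw [map_div₀, map_add, map_one, Complex.conj_I, map_ofNat]
    ring
  have hne : Complex.arg ((1 + Complex.I) / 2) ≠ Real.pi := by
    rw [arg_one_add_I_div_two]
    intro h
    have := Real.pi_pos
    linarith
  rw [hconj, Complex.log_conj _ hne,
    show (starRingEnd ℂ) (Complex.log ((1 + Complex.I) / 2)) - Complex.log ((1 + Complex.I) / 2)
      = -(Complex.log ((1 + Complex.I) / 2) - (starRingEnd ℂ) (Complex.log ((1 + Complex.I) / 2)))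
      by ring,
    Complex.sub_conj, Complex.log_im, arg_one_add_I_div_two]
  push_cast
  ring

theorem pi_base5_series :
    (∑' n : ℕ, (1 / (2 * (n : ℂ) + 1)) * (1 / (1 - 2 * Complex.I)) ^ (2 * n + 1))
      - (∑' n : ℕ, (1 / (2 * (n : ℂ) + 1)) * (1 / (1 + 2 * Complex.I)) ^ (2 * n + 1))
      = Real.pi * Complex.I / 4 := by
  have h5 : (1:ℝ) < Real.sqrt 5 := by
    rw [show (1:ℝ) = Real.sqrt 1 by simp]
    exact Real.sqrt_lt_sqrt (by norm_num) (by norm_num)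
  have hd1 : (1 - 2 * Complex.I : ℂ) ≠ 0 := by
    intro h; have := congrArg Complex.im h; simp at this
  have hd2 : (1 + 2 * Complex.I : ℂ) ≠ 0 := by
    intro h; have := congrArg Complex.im h; simp at this
  have hn1 : ‖(1 - 2 * Complex.I : ℂ)‖ = Real.sqrt 5 := by
    rw [Complex.norm_def, Complex.normSq_apply]
    norm_num
  have hn2 : ‖(1 + 2 * Complex.I : ℂ)‖ = Real.sqrt 5 := by
    rw [Complex.norm_def, Complex.normSq_apply]
    norm_num
  have hz1 : ‖Complex.I * (1 / (1 - 2 * Complex.I))‖ < 1 := by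
    rw [norm_mul, Complex.norm_I, one_mul, norm_div, norm_one, hn1]
    rw [div_lt_one (by linarith)]; linarith
  have hz2 : ‖Complex.I * (1 / (1 + 2 * Complex.I))‖ < 1 := by
    rw [norm_mul, Complex.norm_I, one_mul, norm_div, norm_one, hn2]
    rw [div_lt_one (by linarith)]; linarith
  rw [(key_hasSum hz1).tsum_eq, (key_hasSum hz2).tsum_eq, Complex.arctan, Complex.arctan]
  have hneg : ∀ a : ℂ, Complex.I * a * Complex.I = -a := by
    intro a
    rw [mul_comm Complex.I a, mul_assoc, Complex.I_mul_I, mul_neg_one]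
  have h22 : (2 - 2 * Complex.I : ℂ) ≠ 0 := by
    intro h; have := congrArg Complex.im h; simp at this
  have h22' : (2 + 2 * Complex.I : ℂ) ≠ 0 := by
    intro h; have := congrArg Complex.re h; simp at this
  have hA : (1 + Complex.I * (1 / (1 - 2 * Complex.I)) * Complex.I)
      / (1 - Complex.I * (1 / (1 - 2 * Complex.I)) * Complex.I) = (1 - Complex.I) / 2 := by
    rw [hneg]
    have hden : (1 - -(1 / (1 - 2 * Complex.I)) : ℂ)
        = (2 - 2 * Complex.I) / (1 - 2 * Complex.I) := by
      field_simp
      ring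
    have hnum : (1 + -(1 / (1 - 2 * Complex.I)) : ℂ)
        = (-2 * Complex.I) / (1 - 2 * Complex.I) := by
      field_simp
      ring
    rw [hden, hnum, div_div_div_cancel_right₀, div_eq_div_iff h22 two_ne_zero]
    · linear_combination (-2 : ℂ) * Complex.I_mul_I
    · exact hd1
  have hB : (1 + Complex.I * (1 / (1 + 2 * Complex.I)) * Complex.I)
      / (1 - Complex.I * (1 / (1 + 2 * Complex.I)) * Complex.I) = (1 + Complex.I) / 2 := by
    rw [hneg]
    have hden : (1 - -(1 / (1 + 2 * Complex.I)) : ℂ)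
        = (2 + 2 * Complex.I) / (1 + 2 * Complex.I) := by
      field_simp
      ring
    have hnum : (1 + -(1 / (1 + 2 * Complex.I)) : ℂ)
        = (2 * Complex.I) / (1 + 2 * Complex.I) := by
      field_simp
      ring
    rw [hden, hnum, div_div_div_cancel_right₀, div_eq_div_iff h22' two_ne_zero]
    · linear_combination (-2 : ℂ) * Complex.I_mul_I
    · exact hd2
  rw [hA, hB]
  have hlog := log_diff
  push_cast at hlog ⊢
  linear_combination (Complex.I * Complex.I / 2) * hlog
    + (-(Real.pi : ℂ) * Complex.I / 4) * Complex.I_mul_I
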